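/- Let 0 < ν ≤ p < ∞ and n ≥ 2. For any g ∈ S₀(ℝⁿ), ‖g‖_{L^{p,ν}(ℝⁿ)} ≤ c ‖g‖_{𝓛^{p,ν}}, where ‖g‖_{𝓛^{p,ν}} = (∫_{ℝ₊²} (st)^{ν/p−1} (𝓡_{1,2} g(s,t))^ν ds dt)^{1/ν} is the norm defined via iterated rearrangements. Conversely, if 0 < p ≤ ν < ∞, then ‖g‖_{𝓛^{p,ν}} ≤ c' ‖g‖_{p,ν}. -/

import Mathlib

open MeasureTheory ENNReal Set
noncomputable section

/-- Nonincreasing rearrangement of an ℝ≥0∞-valued function. -/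
def rearr {α : Type*} [MeasurableSpace α] (μ : Measure α) (f : α → ℝ≥0∞) (t : ℝ) : ℝ≥0∞ :=
  sInf {y : ℝ≥0∞ | μ {x | y < f x} ≤ ENNReal.ofReal t}

/-- Lorentz L^{p,ν} functional: (∫₀^∞ (t^{1/p} f*(t))^ν dt/t)^{1/ν}. -/
def lorentz {α : Type*} [MeasurableSpace α] (μ : Measure α) (f : α → ℝ≥0∞)
    (p ν : ℝ) : ℝ≥0∞ :=
  (∫⁻ t in Set.Ioi (0:ℝ),
    (ENNReal.ofReal (t ^ (1/p)) * rearr μ f t) ^ ν / ENNReal.ofReal t) ^ (1/ν)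

/-- Δ₁(h)f(x,y) = f(x+h,y) − f(x,y). -/
def Delta1 {n : ℕ} (h : ℝ) (f : ℝ × (Fin n → ℝ) → ℝ) : ℝ × (Fin n → ℝ) → ℝ :=
  fun z => f (z.1 + h, z.2) - f z

/-- Iterated rearrangement 𝓡₁g(s,y): rearrangement in the first variable. -/
def rearr1 {n : ℕ} (g : ℝ × (Fin n → ℝ) → ℝ) (s : ℝ) (y : Fin n → ℝ) : ℝ≥0∞ :=
  rearr (volume : Measure ℝ) (fun x => (‖g (x, y)‖₊ : ℝ≥0∞)) s

/-- Iterated rearrangement 𝓡_{1,2}g(s,t). -/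
def rearr12 {n : ℕ} (g : ℝ × (Fin n → ℝ) → ℝ) (s t : ℝ) : ℝ≥0∞ :=
  rearr (volume : Measure (Fin n → ℝ)) (fun y => rearr1 g s y) t

/-- ‖g‖_{𝓛^{p,ν}} = (∫_{ℝ₊²} (st)^{ν/p−1} 𝓡_{1,2}g(s,t)^ν ds dt)^{1/ν}. -/
def calLpv {n : ℕ} (g : ℝ × (Fin n → ℝ) → ℝ) (p ν : ℝ) : ℝ≥0∞ :=
  (∫⁻ s in Set.Ioi (0:ℝ), ∫⁻ t in Set.Ioi (0:ℝ),
      ENNReal.ofReal ((s*t) ^ (ν/p - 1)) * rearr12 g s t ^ ν) ^ (1/ν)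

section Yaux
open MeasureTheory ENNReal NNReal Set Filter Topology intervalIntegral
set_option maxHeartbeats 2000000

lemma Ylt_rearr {α : Type*} [MeasurableSpace α] (μ : Measure α) (f : α → ℝ≥0∞) {t : ℝ} {c : ℝ≥0∞}
    (h : ENNReal.ofReal t < μ {x | c < f x}) : c ≤ rearr μ f t := by
  refine le_sInf fun y hy => ?_
  by_contra hyc
  push_neg at hyc
  exact absurd (le_trans (measure_mono (fun x hx => lt_trans hyc hx)) hy) (not_le.2 h)

lemma Yrearr_lt {α : Type*} [MeasurableSpace α] (μ : Measure α) (f : α → ℝ≥0∞) {t : ℝ} {c : ℝ≥0∞}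
    (h : c < rearr μ f t) : ENNReal.ofReal t < μ {x | c < f x} := by
  by_contra hle
  push_neg at hle
  have : rearr μ f t ≤ c :=
    sInf_le (show c ∈ {y : ℝ≥0∞ | μ {x | y < f x} ≤ ENNReal.ofReal t} from hle)
  exact absurd this (not_le.2 h)

lemma Yrearr_antitone {α : Type*} [MeasurableSpace α] (μ : Measure α) (f : α → ℝ≥0∞) :
    Antitone (rearr μ f) := fun t t' h =>
  sInf_le_sInf fun y hy => le_trans hy (ENNReal.ofReal_le_ofReal h)

lemma Yexists_add {c v : ℝ≥0∞} (hc : c ≠ ∞) (h : c < v) :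
    ∃ n : ℕ, c + (((n : ℝ≥0∞)) + 1)⁻¹ < v := by
  obtain ⟨r, hr0, hr⟩ := ENNReal.lt_iff_exists_add_pos_lt.1 h
  obtain ⟨n, hn⟩ := exists_nat_one_div_lt hr0
  refine ⟨n, lt_of_le_of_lt (add_le_add_right ?_ c) hr⟩
  have h1 : ((n : ℝ≥0∞) + 1)⁻¹ = ((((n : ℝ≥0) + 1))⁻¹ : ℝ≥0) := by
    rw [ENNReal.coe_inv (by positivity)]
    norm_cast
    simp
  rw [h1]
  exact ENNReal.coe_le_coe.2 (by rw [one_div] at hn; exact (le_of_lt hn))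




lemma YintIoc {e : ℝ} (he : -1 < e) {a b : ℝ} (ha : 0 ≤ a) (hab : a ≤ b) :
    ∫⁻ t in Ioc a b, ENNReal.ofReal (t ^ e) = ENNReal.ofReal ((b ^ (e+1) - a ^ (e+1)) / (e+1)) := by
  have hint : IntegrableOn (fun t => t ^ e) (Ioc a b) volume :=
    (intervalIntegrable_iff_integrableOn_Ioc_of_le hab).1 (intervalIntegrable_rpow' he)
  have hnn : 0 ≤ᵐ[volume.restrict (Ioc a b)] fun t => t ^ e :=
    (ae_restrict_iff' measurableSet_Ioc).2 (Filter.Eventually.of_forall fun t ht =>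
      Real.rpow_nonneg (le_trans ha ht.1.le) e)
  rw [← ofReal_integral_eq_lintegral_ofReal hint hnn, ← intervalIntegral.integral_of_le hab,
    integral_rpow (Or.inl he)]

lemma YintIoo {e : ℝ} (he : -1 < e) {m : ℝ} (hm : 0 ≤ m) :
    ∫⁻ t in Ioo (0:ℝ) m, ENNReal.ofReal (t ^ e) = ENNReal.ofReal (m ^ (e+1) / (e+1)) := by
  have h1 : ∫⁻ t in Ioo (0:ℝ) m, ENNReal.ofReal (t ^ e)
      = ∫⁻ t in Ioc (0:ℝ) m, ENNReal.ofReal (t ^ e) :=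
    setLIntegral_congr Ioo_ae_eq_Ioc
  rw [h1, YintIoc he le_rfl hm, Real.zero_rpow (by linarith), sub_zero]

lemma YintIoiTop {e : ℝ} (he : -1 < e) :
    ∫⁻ t in Ioi (0:ℝ), ENNReal.ofReal (t ^ e) = ∞ := by
  by_contra h
  have hb : ∀ n : ℕ, ENNReal.ofReal ((n:ℝ) ^ (e+1) / (e+1)) ≤ ∫⁻ t in Ioi (0:ℝ), ENNReal.ofReal (t ^ e) :=
    fun n => (YintIoo he (Nat.cast_nonneg n)).symm.le.trans
      (lintegral_mono_set (fun t ht => ht.1))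
  have hfin := lt_top_iff_ne_top.2 h
  have hb2 : ∀ n : ℕ, (n:ℝ) ^ (e+1) / (e+1) ≤ (∫⁻ t in Ioi (0:ℝ), ENNReal.ofReal (t ^ e)).toReal :=
    fun n => by
      have := ENNReal.toReal_mono h (hb n)
      rwa [ENNReal.toReal_ofReal (div_nonneg (Real.rpow_nonneg (Nat.cast_nonneg n) _) (by linarith))] at this
  have htend : Tendsto (fun n : ℕ => (n:ℝ) ^ (e+1) / (e+1)) atTop atTop :=
    (Filter.Tendsto.atTop_div_const (by linarith)
      ((_root_.tendsto_rpow_atTop (by linarith)).comp tendsto_natCast_atTop_atTop))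
  obtain ⟨n, hn⟩ := (htend.eventually_gt_atTop ((∫⁻ t in Ioi (0:ℝ), ENNReal.ofReal (t ^ e)).toReal)).exists
  exact absurd (hb2 n) (not_le.2 hn)

lemma YintLt {e : ℝ} (he : -1 < e) (b : ℝ≥0∞) :
    ∫⁻ t in Ioi (0:ℝ) ∩ {t : ℝ | ENNReal.ofReal t < b}, ENNReal.ofReal (t ^ e)
      = b ^ (e+1) / ENNReal.ofReal (e+1) := by
  by_cases hb : b = ∞
  · have hs : Ioi (0:ℝ) ∩ {t : ℝ | ENNReal.ofReal t < b} = Ioi 0 := by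
      ext t
      simp [hb, ENNReal.ofReal_lt_top]
    rw [hs, YintIoiTop he, hb, ENNReal.top_rpow_of_pos (by linarith),
      ENNReal.top_div_of_ne_top ENNReal.ofReal_ne_top]
  · have hs : Ioi (0:ℝ) ∩ {t : ℝ | ENNReal.ofReal t < b} = Ioo 0 b.toReal := by
      ext t
      simp only [mem_inter_iff, mem_Ioi, mem_setOf_eq, mem_Ioo]
      constructor
      · rintro ⟨h1, h2⟩
        exact ⟨h1, (ENNReal.ofReal_lt_iff_lt_toReal h1.le hb).1 h2⟩
      · rintro ⟨h1, h2⟩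
        exact ⟨h1, (ENNReal.ofReal_lt_iff_lt_toReal h1.le hb).2 h2⟩
    rw [hs, YintIoo he ENNReal.toReal_nonneg, ENNReal.ofReal_div_of_pos (by linarith),
      ← ENNReal.ofReal_rpow_of_nonneg ENNReal.toReal_nonneg (by linarith),
      ENNReal.ofReal_toReal hb]

lemma YiSup_rpow {e : ℝ} (he : 0 < e) (d : ℕ → ℝ≥0∞) (hd : Monotone d) :
    (⨆ n, d n) ^ e = ⨆ n, d n ^ e := by
  refine le_antisymm ?_ (iSup_le fun n => ENNReal.rpow_le_rpow (le_iSup d n) he.le)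
  have h1 : Tendsto d atTop (𝓝 (⨆ n, d n)) := tendsto_atTop_iSup hd
  have h2 : Tendsto (fun n => d n ^ e) atTop (𝓝 ((⨆ n, d n) ^ e)) :=
    ((ENNReal.continuous_rpow_const).tendsto _).comp h1
  exact le_of_tendsto' h2 fun n => le_iSup (fun n => d n ^ e) n



lemma YK {α : Type*} [MeasurableSpace α] (μ : Measure α) (f : α → ℝ≥0∞)
    {e : ℝ} (he : -1 < e) {c : ℝ≥0∞} (hc : c ≠ ∞) :
    ∫⁻ t in Ioi (0:ℝ), ({t : ℝ | c < rearr μ f t}).indicator (fun t => ENNReal.ofReal (t ^ e)) t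
      = (μ {x | c < f x}) ^ (e+1) / ENNReal.ofReal (e+1) := by
  have hA : MeasurableSet {t : ℝ | c < rearr μ f t} :=
    (Yrearr_antitone μ f).measurable (measurableSet_Ioi (a := c))
  rw [lintegral_indicator hA, Measure.restrict_restrict hA]
  set d : ℝ≥0∞ := μ {x | c < f x} with hd
  set dn : ℕ → ℝ≥0∞ := fun n => μ {x | c + ((n : ℝ≥0∞) + 1)⁻¹ < f x} with hdn
  have hdnmono : Monotone dn := by
    intro i j hij
    refine measure_mono fun x hx => lt_of_le_of_lt (add_le_add_right ?_ c) hx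
    exact ENNReal.inv_le_inv.2 (add_le_add_left (by exact_mod_cast hij) 1)
  have hdsup : d = ⨆ n, dn n := by
    have hU : {x | c < f x} = ⋃ n : ℕ, {x | c + ((n : ℝ≥0∞) + 1)⁻¹ < f x} := by
      ext x
      simp only [mem_setOf_eq, mem_iUnion]
      constructor
      · exact fun h => Yexists_add hc h
      · rintro ⟨n, hn⟩
        exact lt_of_le_of_lt (le_add_right le_rfl) hn
    rw [hd, hU]
    exact (Monotone.measure_iUnion (fun i j hij => fun x hx =>
      lt_of_le_of_lt (add_le_add_right (ENNReal.inv_le_inv.2 (add_le_add_left (by exact_mod_cast hij) 1)) c) hx))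
  have hupper : ∫⁻ t in {t : ℝ | c < rearr μ f t} ∩ Ioi 0, ENNReal.ofReal (t ^ e)
      ≤ d ^ (e+1) / ENNReal.ofReal (e+1) := by
    rw [← YintLt he d]
    refine lintegral_mono_set fun t ht => ⟨ht.2, ?_⟩
    exact Yrearr_lt μ f ht.1
  have hlower : ∀ n : ℕ, dn n ^ (e+1) / ENNReal.ofReal (e+1)
      ≤ ∫⁻ t in {t : ℝ | c < rearr μ f t} ∩ Ioi 0, ENNReal.ofReal (t ^ e) := by
    intro n
    rw [← YintLt he (dn n)]
    refine lintegral_mono_set fun t ht => ⟨?_, ht.1⟩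
    have h1 : c + ((n : ℝ≥0∞) + 1)⁻¹ ≤ rearr μ f t := Ylt_rearr μ f ht.2
    exact lt_of_lt_of_le (ENNReal.lt_add_right hc (by simp)) h1
  refine le_antisymm hupper ?_
  rw [hdsup, YiSup_rpow (by linarith) dn hdnmono, ENNReal.iSup_div]
  exact iSup_le hlower



lemma YP {ν : ℝ} (hν : 0 < ν) (v : ℝ≥0∞) :
    ∫⁻ l in Ioi (0:ℝ), ({l : ℝ | ENNReal.ofReal l < v}).indicator
      (fun l => ENNReal.ofReal (ν * l ^ (ν-1))) l = v ^ ν := by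
  have hS : MeasurableSet {l : ℝ | ENNReal.ofReal l < v} :=
    measurable_ofReal (measurableSet_Iio (a := v))
  rw [lintegral_indicator hS, Measure.restrict_restrict hS, inter_comm]
  have : ∀ l : ℝ, ENNReal.ofReal (ν * l ^ (ν-1)) = ENNReal.ofReal ν * ENNReal.ofReal (l ^ (ν-1)) :=
    fun l => ENNReal.ofReal_mul hν.le
  simp_rw [this]
  rw [lintegral_const_mul' _ _ ENNReal.ofReal_ne_top, YintLt (by linarith) v, sub_add_cancel,
    ENNReal.mul_div_cancel (ENNReal.ofReal_pos.2 hν).ne' ENNReal.ofReal_ne_top]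

lemma Ylayer {β : Type*} [MeasurableSpace β] (μ : Measure β) [SigmaFinite μ]
    {F : β → ℝ≥0∞} (hF : Measurable F) :
    ∫⁻ y, F y ∂μ = ∫⁻ s in Ioi (0:ℝ), μ {y | ENNReal.ofReal s < F y} := by
  have h1 : ∀ y, F y = ∫⁻ s in Ioi (0:ℝ),
      ({s : ℝ | ENNReal.ofReal s < F y}).indicator (fun s => ENNReal.ofReal (1 * s ^ (1-1:ℝ))) s := by
    intro y
    rw [YP one_pos (F y), ENNReal.rpow_one]
  rw [lintegral_congr h1, lintegral_lintegral_swap]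
  · refine setLIntegral_congr_fun measurableSet_Ioi (fun s _ => ?_)
    have h2 : ∀ y, ({s : ℝ | ENNReal.ofReal s < F y}).indicator
        (fun s => ENNReal.ofReal (1 * s ^ (1-1:ℝ))) s
        = ({y : β | ENNReal.ofReal s < F y}).indicator (fun _ => 1) y := by
      intro y
      by_cases h : ENNReal.ofReal s < F y <;>
        simp [Set.indicator_apply, h, Real.rpow_zero]
    simp_rw [h2]
    exact lintegral_indicator_one (hF (measurableSet_Ioi (a := ENNReal.ofReal s)))
  · have hset : MeasurableSet {q : β × ℝ | ENNReal.ofReal q.2 < F q.1} :=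
      measurableSet_lt (measurable_ofReal.comp measurable_snd) (hF.comp measurable_fst)
    have : (Function.uncurry fun y s => ({s : ℝ | ENNReal.ofReal s < F y}).indicator
        (fun s => ENNReal.ofReal (1 * s ^ (1-1:ℝ))) s)
        = ({q : β × ℝ | ENNReal.ofReal q.2 < F q.1}).indicator
          (fun q => ENNReal.ofReal (1 * q.2 ^ (1-1:ℝ))) := by
      funext q
      by_cases h : ENNReal.ofReal q.2 < F q.1 <;>
        simp [Function.uncurry, Set.indicator_apply, h]
    rw [this]
    exact (Measurable.indicator ((measurable_const.mul
      (measurable_snd.pow measurable_const)).ennreal_ofReal) hset).aemeasurable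



lemma YA {α : Type*} [MeasurableSpace α] (μ : Measure α) (f : α → ℝ≥0∞)
    {e ν : ℝ} (he : -1 < e) (hν : 0 < ν) :
    ∫⁻ t in Ioi (0:ℝ), ENNReal.ofReal (t ^ e) * rearr μ f t ^ ν
      = ∫⁻ l in Ioi (0:ℝ), ENNReal.ofReal (ν * l ^ (ν-1)) *
          ((μ {x | ENNReal.ofReal l < f x}) ^ (e+1) / ENNReal.ofReal (e+1)) := by
  have hR : Measurable (rearr μ f) := (Yrearr_antitone μ f).measurable
  have step1 : ∀ t : ℝ, ENNReal.ofReal (t ^ e) * rearr μ f t ^ ν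
      = ∫⁻ l in Ioi (0:ℝ), ENNReal.ofReal (t ^ e) *
          ({l : ℝ | ENNReal.ofReal l < rearr μ f t}).indicator
            (fun l => ENNReal.ofReal (ν * l ^ (ν-1))) l := by
    intro t
    rw [lintegral_const_mul' (ENNReal.ofReal (t ^ e)) _ ENNReal.ofReal_ne_top, YP hν (rearr μ f t)]
  rw [lintegral_congr step1, lintegral_lintegral_swap]
  · refine lintegral_congr fun l => ?_
    have h2 : ∀ t : ℝ, ENNReal.ofReal (t ^ e) *
        ({l' : ℝ | ENNReal.ofReal l' < rearr μ f t}).indicator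
          (fun l' => ENNReal.ofReal (ν * l' ^ (ν-1))) l
        = ENNReal.ofReal (ν * l ^ (ν-1)) *
          ({t : ℝ | ENNReal.ofReal l < rearr μ f t}).indicator
            (fun t => ENNReal.ofReal (t ^ e)) t := by
      intro t
      by_cases h : ENNReal.ofReal l < rearr μ f t <;>
        simp [Set.indicator_apply, h, mul_comm]
    simp_rw [h2]
    rw [lintegral_const_mul' _ _ ENNReal.ofReal_ne_top,
      YK μ f he ENNReal.ofReal_ne_top]
  · have hset : MeasurableSet {q : ℝ × ℝ | ENNReal.ofReal q.2 < rearr μ f q.1} :=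
      measurableSet_lt (measurable_ofReal.comp measurable_snd) (hR.comp measurable_fst)
    have heq : (Function.uncurry fun t l => ENNReal.ofReal (t ^ e) *
        ({l' : ℝ | ENNReal.ofReal l' < rearr μ f t}).indicator
          (fun l' => ENNReal.ofReal (ν * l' ^ (ν-1))) l)
        = fun q : ℝ × ℝ => ENNReal.ofReal (q.1 ^ e) *
            ({q' : ℝ × ℝ | ENNReal.ofReal q'.2 < rearr μ f q'.1}).indicator
              (fun q' => ENNReal.ofReal (ν * q'.2 ^ (ν-1))) q := by
      funext q
      by_cases h : ENNReal.ofReal q.2 < rearr μ f q.1 <;>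
        simp [Function.uncurry, Set.indicator_apply, h]
    rw [heq]
    exact (((measurable_fst.pow measurable_const).ennreal_ofReal).mul
      ((Measurable.indicator ((measurable_const.mul
        (measurable_snd.pow measurable_const)).ennreal_ofReal) hset))).aemeasurable



lemma Yrpow_split {r : ℝ} (hr : 1 ≤ r) (x : ℝ≥0∞) : x ^ (r-1) * x = x ^ r := by
  rcases eq_or_lt_of_le hr with h | h
  · rw [← h]; simp
  · by_cases hx0 : x = 0
    · rw [hx0, ENNReal.zero_rpow_of_pos (by linarith), ENNReal.zero_rpow_of_pos (by linarith),
        mul_zero]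
    · by_cases hxt : x = ⊤
      · rw [hxt, ENNReal.top_rpow_of_pos (by linarith), ENNReal.top_rpow_of_pos (by linarith),
          ENNReal.top_mul_top]
      · calc x ^ (r-1) * x = x ^ (r-1) * x ^ (1:ℝ) := by rw [ENNReal.rpow_one]
          _ = x ^ ((r-1)+1) := (ENNReal.rpow_add _ _ hx0 hxt).symm
          _ = x ^ r := by ring_nf

lemma YH1 {r : ℝ} (hr : 1 ≤ r) {m : ℝ → ℝ≥0∞} (hm : Antitone m) :
    ∫⁻ s in Ioi (0:ℝ), ENNReal.ofReal (s ^ (r-1)) * m s ^ r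
      ≤ (∫⁻ s in Ioi (0:ℝ), m s) ^ r := by
  set M := ∫⁻ s in Ioi (0:ℝ), m s with hM
  by_cases hMtop : M = ⊤
  · rw [hMtop, ENNReal.top_rpow_of_pos (by linarith)]; exact le_top
  have hbound : ∀ s ∈ Ioi (0:ℝ), ENNReal.ofReal (s ^ (r-1)) * m s ^ r ≤ M ^ (r-1) * m s := by
    intro s hs
    have hsm : ENNReal.ofReal s * m s ≤ M := by
      have h1 : ENNReal.ofReal s * m s = ∫⁻ _ in Ioo (0:ℝ) s, m s := by
        rw [setLIntegral_const, Real.volume_Ioo, sub_zero, mul_comm]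
      rw [h1]
      refine le_trans (setLIntegral_mono' measurableSet_Ioo fun u hu => hm hu.2.le) ?_
      exact lintegral_mono_set fun u hu => hu.1
    have h2 : ENNReal.ofReal (s ^ (r-1)) * m s ^ r = (ENNReal.ofReal s * m s) ^ (r-1) * m s := by
      rw [ENNReal.mul_rpow_of_nonneg _ _ (by linarith),
        ← ENNReal.ofReal_rpow_of_pos hs, mul_assoc, Yrpow_split hr]
    rw [h2]
    exact mul_le_mul_left (ENNReal.rpow_le_rpow hsm (by linarith)) _
  calc ∫⁻ s in Ioi (0:ℝ), ENNReal.ofReal (s ^ (r-1)) * m s ^ r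
      ≤ ∫⁻ s in Ioi (0:ℝ), M ^ (r-1) * m s :=
        setLIntegral_mono' measurableSet_Ioi hbound
    _ = M ^ (r-1) * M := by
        rw [lintegral_const_mul' _ _ (ENNReal.rpow_ne_top_of_nonneg (by linarith) hMtop)]
    _ = M ^ r := Yrpow_split hr M

lemma Yfinset_rpow {r : ℝ} (hr0 : 0 < r) (hr : r ≤ 1) {ι : Type*} (S : Finset ι) (a : ι → ℝ≥0∞) :
    (∑ i ∈ S, a i) ^ r ≤ ∑ i ∈ S, a i ^ r := by
  classical
  induction S using Finset.induction_on with
  | empty => simp [ENNReal.zero_rpow_of_pos hr0]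
  | insert _ _ hj ih =>
    rename_i j T
    rw [Finset.sum_insert hj, Finset.sum_insert hj]
    exact le_trans (ENNReal.rpow_add_le_add_rpow _ _ hr0.le hr) (add_le_add_right ih _)

lemma Ytsum_rpow {r : ℝ} (hr0 : 0 < r) (hr : r ≤ 1) {ι : Type*} [Countable ι] (a : ι → ℝ≥0∞) :
    (∑' i, a i) ^ r ≤ ∑' i, a i ^ r := by
  have hs : HasSum a (∑' i, a i) := ENNReal.summable.hasSum
  have h2 : Tendsto (fun S : Finset ι => (∑ i ∈ S, a i) ^ r) atTop (𝓝 ((∑' i, a i) ^ r)) :=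
    ((ENNReal.continuous_rpow_const).tendsto _).comp hs
  exact le_of_tendsto h2 (Filter.Eventually.of_forall fun S =>
    le_trans (Yfinset_rpow hr0 hr S a) (ENNReal.sum_le_tsum S))



lemma YH2 {r : ℝ} (hr0 : 0 < r) (hr : r ≤ 1) {m : ℝ → ℝ≥0∞} (hm : Antitone m) :
    (∫⁻ s in Ioi (0:ℝ), m s) ^ r
      ≤ (ENNReal.ofReal ((1 - (2:ℝ) ^ (-r)) / r))⁻¹ *
          ∫⁻ s in Ioi (0:ℝ), ENNReal.ofReal (s ^ (r-1)) * m s ^ r := by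
  have h2r : (2:ℝ) ^ (-r) < 1 := Real.rpow_lt_one_of_one_lt_of_neg one_lt_two (by linarith)
  have hCpos : 0 < (1 - (2:ℝ) ^ (-r)) / r := div_pos (by linarith) hr0
  set C : ℝ≥0∞ := ENNReal.ofReal ((1 - (2:ℝ) ^ (-r)) / r) with hC
  have hC0 : C ≠ 0 := (ENNReal.ofReal_pos.2 hCpos).ne'
  have hCt : C ≠ ⊤ := ENNReal.ofReal_ne_top
  set a : ℤ → ℝ≥0∞ := fun k => ENNReal.ofReal ((2:ℝ) ^ k) * m ((2:ℝ) ^ k) with ha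
  -- upper bound for M
  have hcover : Ioi (0:ℝ) ⊆ ⋃ k : ℤ, Ioc ((2:ℝ) ^ k) ((2:ℝ) ^ (k+1)) := by
    intro t ht
    obtain ⟨k, hk⟩ := exists_mem_Ioc_zpow (x := t) (y := (2:ℝ)) ht one_lt_two
    exact mem_iUnion.2 ⟨k, hk⟩
  have hMle : (∫⁻ s in Ioi (0:ℝ), m s) ≤ ∑' k : ℤ, a k := by
    refine le_trans (lintegral_mono_set hcover) ?_
    refine le_trans (lintegral_iUnion_le _ _) (ENNReal.tsum_le_tsum fun k => ?_)
    have h1 : ∫⁻ s in Ioc ((2:ℝ) ^ k) ((2:ℝ) ^ (k+1)), m s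
        ≤ ∫⁻ _ in Ioc ((2:ℝ) ^ k) ((2:ℝ) ^ (k+1)), m ((2:ℝ) ^ k) :=
      setLIntegral_mono' measurableSet_Ioc fun u hu => hm hu.1.le
    refine le_trans h1 ?_
    rw [setLIntegral_const, Real.volume_Ioc]
    have h2 : (2:ℝ) ^ (k+1) - (2:ℝ) ^ k = (2:ℝ) ^ k := by
      rw [zpow_add_one₀ (two_ne_zero)]; ring
    rw [h2, mul_comm]
  -- lower bound for the weighted integral
  have hdisj : Pairwise (Function.onFun Disjoint fun k : ℤ => Ioc ((2:ℝ) ^ (k-1)) ((2:ℝ) ^ k)) := by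
    intro i j hij
    have key : ∀ i j : ℤ, i < j →
        Disjoint (Ioc ((2:ℝ) ^ (i-1)) ((2:ℝ) ^ i)) (Ioc ((2:ℝ) ^ (j-1)) ((2:ℝ) ^ j)) := by
      intro i j hlt
      refine Set.disjoint_left.2 fun t h1 h2 => ?_
      have : (2:ℝ) ^ i ≤ (2:ℝ) ^ (j-1) := zpow_le_zpow_right₀ one_le_two (by omega)
      linarith [h1.2, h2.1]
    rcases lt_or_gt_of_ne hij with h | h
    · exact key _ _ h
    · exact (key _ _ h).symm
  have hterm : ∀ k : ℤ, a k ^ r * C ≤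
      ∫⁻ s in Ioc ((2:ℝ) ^ (k-1)) ((2:ℝ) ^ k), ENNReal.ofReal (s ^ (r-1)) * m s ^ r := by
    intro k
    have hpk : (0:ℝ) < (2:ℝ) ^ k := zpow_pos two_pos k
    have hpk1 : (0:ℝ) < (2:ℝ) ^ (k-1) := zpow_pos two_pos _
    have hle : (2:ℝ) ^ (k-1) ≤ (2:ℝ) ^ k := zpow_le_zpow_right₀ one_le_two (by omega)
    have h1 : ∫⁻ s in Ioc ((2:ℝ) ^ (k-1)) ((2:ℝ) ^ k), m ((2:ℝ) ^ k) ^ r * ENNReal.ofReal (s ^ (r-1))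
        ≤ ∫⁻ s in Ioc ((2:ℝ) ^ (k-1)) ((2:ℝ) ^ k), ENNReal.ofReal (s ^ (r-1)) * m s ^ r := by
      refine setLIntegral_mono' measurableSet_Ioc fun u hu => ?_
      rw [mul_comm]
      exact mul_le_mul_right (ENNReal.rpow_le_rpow (hm hu.2) hr0.le) _
    refine le_trans ?_ h1
    have hmeas : Measurable fun s : ℝ => ENNReal.ofReal (s ^ (r-1)) :=
      (measurable_id'.pow_const _).ennreal_ofReal
    rw [lintegral_const_mul _ hmeas, YintIoc (by linarith) hpk1.le hle, sub_add_cancel]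
    have hsplit : ((2:ℝ) ^ (k-1)) ^ r = ((2:ℝ) ^ k) ^ r * (2:ℝ) ^ (-r) := by
      rw [show (2:ℝ) ^ (k-1) = (2:ℝ) ^ k * (2:ℝ)⁻¹ by
          rw [zpow_sub_one₀ (two_ne_zero : (2:ℝ) ≠ 0) k],
        Real.mul_rpow hpk.le (by norm_num), Real.inv_rpow (by norm_num),
        ← Real.rpow_neg (by norm_num)]
    have hval : (((2:ℝ) ^ k) ^ r - ((2:ℝ) ^ (k-1)) ^ r) / r
        = ((2:ℝ) ^ k) ^ r * ((1 - (2:ℝ) ^ (-r)) / r) := by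
      rw [hsplit]; ring
    rw [hval, ENNReal.ofReal_mul (by positivity)]
    have hak : a k ^ r = ENNReal.ofReal (((2:ℝ) ^ k) ^ r) * m ((2:ℝ) ^ k) ^ r := by
      rw [ha]
      simp only []
      rw [ENNReal.mul_rpow_of_nonneg _ _ hr0.le, ENNReal.ofReal_rpow_of_pos hpk]
    rw [hak, hC]
    exact le_of_eq (by ring)
  have hfinal : (∑' k : ℤ, a k ^ r) * C
      ≤ ∫⁻ s in Ioi (0:ℝ), ENNReal.ofReal (s ^ (r-1)) * m s ^ r := by
    rw [← ENNReal.tsum_mul_right]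
    refine le_trans (ENNReal.tsum_le_tsum hterm) ?_
    rw [← lintegral_iUnion (fun _ => measurableSet_Ioc) hdisj]
    exact lintegral_mono_set (iUnion_subset fun k t ht => lt_trans (zpow_pos two_pos _) ht.1)
  calc (∫⁻ s in Ioi (0:ℝ), m s) ^ r
      ≤ (∑' k : ℤ, a k) ^ r := ENNReal.rpow_le_rpow hMle hr0.le
    _ ≤ ∑' k : ℤ, a k ^ r := Ytsum_rpow hr0 hr a
    _ = C⁻¹ * ((∑' k : ℤ, a k ^ r) * C) := by
        rw [mul_comm (∑' k : ℤ, a k ^ r) C, ← mul_assoc, ENNReal.inv_mul_cancel hC0 hCt, one_mul]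
    _ ≤ _ := mul_le_mul_right hfinal _




lemma Yscale {f : ℝ → ℝ≥0∞} (hf : Measurable f) :
    ∫⁻ l in Ioi (0:ℝ), f (l/2) = 2 * ∫⁻ l in Ioi (0:ℝ), f l := by
  have hmap : Measure.map (fun x : ℝ => 2 * x) volume = ENNReal.ofReal |(2:ℝ)⁻¹| • volume :=
    Real.map_volume_mul_left two_ne_zero
  have hvol : (volume : Measure ℝ) = (2:ℝ≥0∞) • Measure.map (fun x : ℝ => 2 * x) volume := by
    rw [hmap, smul_smul, abs_of_pos (by norm_num : (0:ℝ) < 2⁻¹),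
      ENNReal.ofReal_inv_of_pos two_pos, ENNReal.ofReal_ofNat,
      ENNReal.mul_inv_cancel (by norm_num) (by norm_num), one_smul]
  have hind : Measurable ((Ioi (0:ℝ)).indicator (fun l => f (l/2))) :=
    (hf.comp (measurable_id.div_const 2)).indicator measurableSet_Ioi
  calc ∫⁻ l in Ioi (0:ℝ), f (l/2)
      = ∫⁻ l, (Ioi (0:ℝ)).indicator (fun l => f (l/2)) l := by
        rw [← lintegral_indicator measurableSet_Ioi]
    _ = 2 * ∫⁻ l, (Ioi (0:ℝ)).indicator (fun l => f (l/2)) l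
          ∂(Measure.map (fun x : ℝ => 2 * x) volume) := by
        conv_lhs => rw [hvol]
        rw [lintegral_smul_measure, smul_eq_mul]
    _ = 2 * ∫⁻ x, (Ioi (0:ℝ)).indicator (fun l => f (l/2)) (2 * x) := by
        rw [lintegral_map hind (measurable_const_mul 2)]
    _ = 2 * ∫⁻ x, (Ioi (0:ℝ)).indicator f x := by
        congr 1
        refine lintegral_congr fun x => ?_
        by_cases hx : x ∈ Ioi (0:ℝ)
        · have h2x : (2:ℝ) * x ∈ Ioi (0:ℝ) := by simpa using mul_pos two_pos (show (0:ℝ) < x from hx)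
          rw [indicator_of_mem h2x, indicator_of_mem hx]
          norm_num
        · have h2x : (2:ℝ) * x ∉ Ioi (0:ℝ) := by
            simp only [mem_Ioi, not_lt] at hx ⊢
            linarith
          rw [indicator_of_notMem h2x, indicator_of_notMem hx]
    _ = 2 * ∫⁻ l in Ioi (0:ℝ), f l := by rw [lintegral_indicator measurableSet_Ioi]



lemma Yd1_meas {n : ℕ} {g : ℝ × (Fin n → ℝ) → ℝ} (hg : Measurable g) (c : ℝ≥0∞) :
    Measurable fun y : Fin n → ℝ => volume {x : ℝ | c < (‖g (x, y)‖₊ : ℝ≥0∞)} := by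
  have hG : Measurable fun z : ℝ × (Fin n → ℝ) => (‖g z‖₊ : ℝ≥0∞) :=
    hg.nnnorm.coe_nnreal_ennreal
  have hs : MeasurableSet {z : ℝ × (Fin n → ℝ) | c < (‖g z‖₊ : ℝ≥0∞)} :=
    hG measurableSet_Ioi
  exact measurable_measure_prodMk_right (μ := (volume : Measure ℝ)) hs

lemma Yrearr1_meas {n : ℕ} {g : ℝ × (Fin n → ℝ) → ℝ} (hg : Measurable g) :
    Measurable (Function.uncurry (rearr1 g)) := by
  apply measurable_of_Ioi
  intro c
  have hU : (Function.uncurry (rearr1 g)) ⁻¹' (Ioi c)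
      = ⋃ a : ℚ, ({z : ℝ × (Fin n → ℝ) | c < ENNReal.ofReal (a:ℝ)} ∩
          {z : ℝ × (Fin n → ℝ) |
            ENNReal.ofReal z.1 < volume {x : ℝ | ENNReal.ofReal (a:ℝ) < (‖g (x, z.2)‖₊ : ℝ≥0∞)}}) := by
    ext z
    simp only [Function.uncurry, mem_preimage, mem_Ioi, mem_iUnion, mem_inter_iff, mem_setOf_eq]
    constructor
    · intro h
      obtain ⟨a, _, h1, h2⟩ := ENNReal.lt_iff_exists_rat_btwn.1 h
      exact ⟨a, h1, Yrearr_lt _ _ h2⟩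
    · rintro ⟨a, h1, h2⟩
      exact lt_of_lt_of_le h1 (Ylt_rearr _ _ h2)
  rw [hU]
  refine MeasurableSet.iUnion fun a => (MeasurableSet.const _).inter ?_
  exact measurableSet_lt (measurable_ofReal.comp measurable_fst)
    ((Yd1_meas hg (ENNReal.ofReal (a:ℝ))).comp measurable_snd)

lemma Yrearr1_meas_y {n : ℕ} {g : ℝ × (Fin n → ℝ) → ℝ} (hg : Measurable g) (s : ℝ) :
    Measurable (rearr1 g s) :=
  (Yrearr1_meas hg).of_uncurry_left

lemma Ym1_joint {n : ℕ} {g : ℝ × (Fin n → ℝ) → ℝ} (hg : Measurable g) :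
    Measurable fun q : ℝ × ℝ =>
      volume {y : Fin n → ℝ | ENNReal.ofReal q.2 < rearr1 g q.1 y} := by
  have hg2 : Measurable fun w : (ℝ × ℝ) × (Fin n → ℝ) => rearr1 g w.1.1 w.2 := by
    have h0 : (fun w : (ℝ × ℝ) × (Fin n → ℝ) => rearr1 g w.1.1 w.2)
        = (Function.uncurry (rearr1 g)) ∘ (fun w : (ℝ × ℝ) × (Fin n → ℝ) => (w.1.1, w.2)) :=
      rfl
    rw [h0]
    exact (Yrearr1_meas hg).comp (measurable_fst.fst.prodMk measurable_snd)
  have hS : MeasurableSet {w : (ℝ × ℝ) × (Fin n → ℝ) |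
      ENNReal.ofReal w.1.2 < rearr1 g w.1.1 w.2} :=
    measurableSet_lt (f := fun w : (ℝ × ℝ) × (Fin n → ℝ) => ENNReal.ofReal w.1.2)
      (g := fun w : (ℝ × ℝ) × (Fin n → ℝ) => rearr1 g w.1.1 w.2)
      (measurable_ofReal.comp measurable_fst.snd) hg2
  have key : Measurable fun q : ℝ × ℝ => ∫⁻ y : Fin n → ℝ,
      ({w : (ℝ × ℝ) × (Fin n → ℝ) | ENNReal.ofReal w.1.2 < rearr1 g w.1.1 w.2}).indicator
        (fun _ => 1) (q, y) ∂volume :=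
    Measurable.lintegral_prod_right (f := fun q y =>
      ({w : (ℝ × ℝ) × (Fin n → ℝ) | ENNReal.ofReal w.1.2 < rearr1 g w.1.1 w.2}).indicator
        (fun _ => 1) (q, y))
      (measurable_const.indicator hS)
  have heq : (fun q : ℝ × ℝ => volume {y : Fin n → ℝ | ENNReal.ofReal q.2 < rearr1 g q.1 y})
      = fun q : ℝ × ℝ => ∫⁻ y : Fin n → ℝ,
        ({w : (ℝ × ℝ) × (Fin n → ℝ) | ENNReal.ofReal w.1.2 < rearr1 g w.1.1 w.2}).indicator
          (fun _ => 1) (q, y) ∂volume := by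
    funext q
    have h2 : ∀ y : Fin n → ℝ,
        ({w : (ℝ × ℝ) × (Fin n → ℝ) | ENNReal.ofReal w.1.2 < rearr1 g w.1.1 w.2}).indicator
          (fun _ => (1:ℝ≥0∞)) (q, y)
        = ({y : Fin n → ℝ | ENNReal.ofReal q.2 < rearr1 g q.1 y}).indicator (fun _ => 1) y := by
      intro y
      by_cases h : ENNReal.ofReal q.2 < rearr1 g q.1 y <;> simp [Set.indicator_apply, h]
    simp_rw [h2]
    exact (lintegral_indicator_one ((Yrearr1_meas_y hg q.1) measurableSet_Ioi)).symm
  rw [heq]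
  exact key



def Ym0 {n : ℕ} (g : ℝ × (Fin n → ℝ) → ℝ) (l s : ℝ) : ℝ≥0∞ :=
  volume {y : Fin n → ℝ |
    ENNReal.ofReal s < volume {x : ℝ | ENNReal.ofReal l < (‖g (x, y)‖₊ : ℝ≥0∞)}}

def Ym1 {n : ℕ} (g : ℝ × (Fin n → ℝ) → ℝ) (l s : ℝ) : ℝ≥0∞ :=
  volume {y : Fin n → ℝ | ENNReal.ofReal l < rearr1 g s y}

lemma YlorentzPow {n : ℕ} {g : ℝ × (Fin n → ℝ) → ℝ} (hg : Measurable g) {p ν : ℝ}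
    (hp : 0 < p) (hν : 0 < ν) :
    ∫⁻ t in Ioi (0:ℝ),
        (ENNReal.ofReal (t ^ (1/p)) * rearr volume (fun x => (‖g x‖₊ : ℝ≥0∞)) t) ^ ν
          / ENNReal.ofReal t
      = (∫⁻ l in Ioi (0:ℝ), ENNReal.ofReal (ν * l ^ (ν-1)) *
          (∫⁻ s in Ioi (0:ℝ), Ym0 g l s) ^ (ν/p)) / ENNReal.ofReal (ν/p) := by
  have hr : (0:ℝ) < ν/p := div_pos hν hp
  have h0 : ∫⁻ t in Ioi (0:ℝ),
      (ENNReal.ofReal (t ^ (1/p)) * rearr volume (fun x => (‖g x‖₊ : ℝ≥0∞)) t) ^ ν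
        / ENNReal.ofReal t
      = ∫⁻ t in Ioi (0:ℝ), ENNReal.ofReal (t ^ (ν/p - 1)) *
          rearr volume (fun x => (‖g x‖₊ : ℝ≥0∞)) t ^ ν := by
    refine setLIntegral_congr_fun measurableSet_Ioi (fun t ht => ?_)
    have ht0 : (0:ℝ) < t := ht
    have hkey : ENNReal.ofReal (t ^ ((1/p) * ν)) / ENNReal.ofReal t
        = ENNReal.ofReal (t ^ (ν/p - 1)) := by
      rw [← ENNReal.ofReal_div_of_pos ht0]
      congr 1
      rw [Real.rpow_sub ht0, Real.rpow_one]
      congr 2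
      ring
    rw [ENNReal.mul_rpow_of_nonneg _ _ hν.le,
      ENNReal.ofReal_rpow_of_pos (Real.rpow_pos_of_pos ht0 (1/p)), ← Real.rpow_mul ht0.le,
      mul_comm (ENNReal.ofReal (t ^ (1/p * ν))), mul_div_assoc, hkey, mul_comm]
  rw [h0, YA volume (fun x => (‖g x‖₊ : ℝ≥0∞)) (by linarith : -1 < ν/p - 1) hν, sub_add_cancel]
  have hDist : ∀ l : ℝ, volume {z : ℝ × (Fin n → ℝ) | ENNReal.ofReal l < (‖g z‖₊ : ℝ≥0∞)}
      = ∫⁻ s in Ioi (0:ℝ), Ym0 g l s := by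
    intro l
    have hs : MeasurableSet {z : ℝ × (Fin n → ℝ) | ENNReal.ofReal l < (‖g z‖₊ : ℝ≥0∞)} :=
      hg.nnnorm.coe_nnreal_ennreal measurableSet_Ioi
    rw [Measure.volume_eq_prod, Measure.prod_apply_symm hs]
    exact Ylayer (volume : Measure (Fin n → ℝ)) (Yd1_meas hg (ENNReal.ofReal l))
  have hK : (ENNReal.ofReal (ν/p))⁻¹ ≠ ⊤ :=
    ENNReal.inv_ne_top.2 (ENNReal.ofReal_pos.2 hr).ne'
  calc ∫⁻ l in Ioi (0:ℝ), ENNReal.ofReal (ν * l ^ (ν-1)) *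
        ((volume {z : ℝ × (Fin n → ℝ) | ENNReal.ofReal l < (‖g z‖₊ : ℝ≥0∞)}) ^ (ν/p)
          / ENNReal.ofReal (ν/p))
      = ∫⁻ l in Ioi (0:ℝ), (ENNReal.ofReal (ν * l ^ (ν-1)) *
          (∫⁻ s in Ioi (0:ℝ), Ym0 g l s) ^ (ν/p)) * (ENNReal.ofReal (ν/p))⁻¹ := by
        refine lintegral_congr fun l => ?_
        rw [hDist l, div_eq_mul_inv, mul_assoc]
    _ = (∫⁻ l in Ioi (0:ℝ), ENNReal.ofReal (ν * l ^ (ν-1)) *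
          (∫⁻ s in Ioi (0:ℝ), Ym0 g l s) ^ (ν/p)) / ENNReal.ofReal (ν/p) := by
        rw [lintegral_mul_const' _ _ hK]
        rfl



lemma YcalPow {n : ℕ} {g : ℝ × (Fin n → ℝ) → ℝ} (hg : Measurable g) {p ν : ℝ}
    (hp : 0 < p) (hν : 0 < ν) :
    ∫⁻ s in Ioi (0:ℝ), ∫⁻ t in Ioi (0:ℝ),
        ENNReal.ofReal ((s*t) ^ (ν/p - 1)) * rearr12 g s t ^ ν
      = (∫⁻ l in Ioi (0:ℝ), ENNReal.ofReal (ν * l ^ (ν-1)) *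
          ∫⁻ s in Ioi (0:ℝ), ENNReal.ofReal (s ^ (ν/p - 1)) * Ym1 g l s ^ (ν/p))
        / ENNReal.ofReal (ν/p) := by
  have hr : (0:ℝ) < ν/p := div_pos hν hp
  have hK : (ENNReal.ofReal (ν/p))⁻¹ ≠ ⊤ :=
    ENNReal.inv_ne_top.2 (ENNReal.ofReal_pos.2 hr).ne'
  have step1 : ∀ s ∈ Ioi (0:ℝ),
      ∫⁻ t in Ioi (0:ℝ), ENNReal.ofReal ((s*t) ^ (ν/p - 1)) * rearr12 g s t ^ ν
      = ∫⁻ l in Ioi (0:ℝ), ENNReal.ofReal (s ^ (ν/p - 1)) *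
          (ENNReal.ofReal (ν * l ^ (ν-1)) * (Ym1 g l s ^ (ν/p) / ENNReal.ofReal (ν/p))) := by
    intro s hs
    have hs0 : (0:ℝ) < s := hs
    have h1 : ∫⁻ t in Ioi (0:ℝ), ENNReal.ofReal ((s*t) ^ (ν/p - 1)) * rearr12 g s t ^ ν
        = ∫⁻ t in Ioi (0:ℝ), ENNReal.ofReal (s ^ (ν/p - 1)) *
            (ENNReal.ofReal (t ^ (ν/p - 1)) * rearr12 g s t ^ ν) := by
      refine setLIntegral_congr_fun measurableSet_Ioi
        (fun t ht => ?_)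
      rw [Real.mul_rpow hs0.le (le_of_lt ht), ENNReal.ofReal_mul
        (Real.rpow_nonneg hs0.le _), mul_assoc]
    rw [h1, lintegral_const_mul' _ _ ENNReal.ofReal_ne_top,
      show (fun t => ENNReal.ofReal (t ^ (ν/p - 1)) * rearr12 g s t ^ ν)
        = fun t => ENNReal.ofReal (t ^ (ν/p - 1)) *
            rearr (volume : Measure (Fin n → ℝ)) (rearr1 g s) t ^ ν from rfl,
      YA (volume : Measure (Fin n → ℝ)) (rearr1 g s) (by linarith : -1 < ν/p - 1) hν,
      sub_add_cancel, ← lintegral_const_mul' _ _ (ENNReal.ofReal_ne_top (r := s ^ (ν/p - 1)))]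
    rfl
  rw [setLIntegral_congr_fun measurableSet_Ioi step1,
    lintegral_lintegral_swap]
  · have inner : ∀ l : ℝ,
        ∫⁻ s in Ioi (0:ℝ), ENNReal.ofReal (s ^ (ν/p - 1)) *
          (ENNReal.ofReal (ν * l ^ (ν-1)) * (Ym1 g l s ^ (ν/p) / ENNReal.ofReal (ν/p)))
        = (ENNReal.ofReal (ν * l ^ (ν-1)) *
            ∫⁻ s in Ioi (0:ℝ), ENNReal.ofReal (s ^ (ν/p - 1)) * Ym1 g l s ^ (ν/p))
          * (ENNReal.ofReal (ν/p))⁻¹ := by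
      intro l
      have hpt : ∀ s : ℝ, ENNReal.ofReal (s ^ (ν/p - 1)) *
          (ENNReal.ofReal (ν * l ^ (ν-1)) * (Ym1 g l s ^ (ν/p) / ENNReal.ofReal (ν/p)))
          = ENNReal.ofReal (ν * l ^ (ν-1)) *
            ((ENNReal.ofReal (s ^ (ν/p - 1)) * Ym1 g l s ^ (ν/p)) * (ENNReal.ofReal (ν/p))⁻¹) := by
        intro s
        simp only [div_eq_mul_inv]; ring
      rw [lintegral_congr hpt, lintegral_const_mul' _ _ ENNReal.ofReal_ne_top,
        lintegral_mul_const' _ _ hK, ← mul_assoc]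
    rw [lintegral_congr inner, lintegral_mul_const' _ _ hK]
    rfl
  · have hm1 : Measurable fun q : ℝ × ℝ => Ym1 g q.2 q.1 := Ym1_joint hg
    have hmeas : Measurable (Function.uncurry fun s l =>
        ENNReal.ofReal (s ^ (ν/p - 1)) *
          (ENNReal.ofReal (ν * l ^ (ν-1)) * (Ym1 g l s ^ (ν/p) / ENNReal.ofReal (ν/p)))) := by
      refine Measurable.mul ?_ (Measurable.mul ?_ ?_)
      · exact (measurable_fst.pow_const _).ennreal_ofReal
      · exact (measurable_const.mul (measurable_snd.pow_const _)).ennreal_ofReal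
      · exact (Measurable.mul (hm1.pow measurable_const) measurable_const)
    exact hmeas.aemeasurable


end Yaux

/-- Yatsenko's inequalities (2.15)–(2.16): ‖g‖_{p,ν} ≤ c ‖g‖_{𝓛^{p,ν}} if 0 < ν ≤ p,
and ‖g‖_{𝓛^{p,ν}} ≤ c' ‖g‖_{p,ν} if 0 < p ≤ ν, for g ∈ S₀(ℝⁿ), n ≥ 2. -/
theorem lorentz_iterated_rearrangement (n : ℕ) (hn : 1 ≤ n) (p ν : ℝ)
    (hp : 0 < p) (hν : 0 < ν) :
    (ν ≤ p → ∃ c > 0, ∀ g : ℝ × (Fin n → ℝ) → ℝ, Measurable g →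
      (∀ y : ℝ, 0 < y → volume {x | y < |g x|} < ∞) →
      lorentz volume (fun x => (‖g x‖₊ : ℝ≥0∞)) p ν ≤ ENNReal.ofReal c * calLpv g p ν) ∧
    (p ≤ ν → ∃ c > 0, ∀ g : ℝ × (Fin n → ℝ) → ℝ, Measurable g →
      (∀ y : ℝ, 0 < y → volume {x | y < |g x|} < ∞) →
      calLpv g p ν ≤ ENNReal.ofReal c * lorentz volume (fun x => (‖g x‖₊ : ℝ≥0∞)) p ν) := by
  have hr : (0:ℝ) < ν/p := div_pos hν hp
  have hKne : (ENNReal.ofReal (ν/p)) ≠ 0 := (ENNReal.ofReal_pos.2 hr).ne'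
  constructor
  · -- direction 1 : ν ≤ p
    intro hle
    have hr1 : ν/p ≤ 1 := (div_le_one hp).2 hle
    have h2r : (2:ℝ) ^ (-(ν/p)) < 1 :=
      Real.rpow_lt_one_of_one_lt_of_neg one_lt_two (by linarith)
    have hbpos : 0 < (1 - (2:ℝ) ^ (-(ν/p))) / (ν/p) := div_pos (by linarith) hr
    set c₀ : ℝ := ((1 - (2:ℝ) ^ (-(ν/p))) / (ν/p))⁻¹ * (2 * 2 ^ (ν-1)) with hc₀
    have hc₀pos : 0 < c₀ :=
      mul_pos (inv_pos.2 hbpos) (mul_pos two_pos (Real.rpow_pos_of_pos two_pos _))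
    refine ⟨c₀ ^ (1/ν), Real.rpow_pos_of_pos hc₀pos _, fun g hg _ => ?_⟩
    have hL := YlorentzPow hg hp hν
    have hCa := YcalPow hg hp hν
    set W : ℝ → ℝ≥0∞ := fun l => ENNReal.ofReal (ν * l ^ (ν-1)) with hW
    set S1 : ℝ → ℝ≥0∞ :=
      fun u => ∫⁻ s in Ioi (0:ℝ), ENNReal.ofReal (s ^ (ν/p - 1)) * Ym1 g u s ^ (ν/p) with hS1
    set C₂ : ℝ≥0∞ := (ENNReal.ofReal ((1 - (2:ℝ) ^ (-(ν/p))) / (ν/p)))⁻¹ with hC₂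
    have hC₂ne : C₂ ≠ ⊤ := ENNReal.inv_ne_top.2 (ENNReal.ofReal_pos.2 hbpos).ne'
    -- measurability of S1
    have hm1 : Measurable fun q : ℝ × ℝ => Ym1 g q.1 q.2 := by
      have h0 : (fun q : ℝ × ℝ => Ym1 g q.1 q.2)
          = (fun q : ℝ × ℝ => volume {y : Fin n → ℝ | ENNReal.ofReal q.2 < rearr1 g q.1 y})
            ∘ Prod.swap := rfl
      rw [h0]
      exact (Ym1_joint hg).comp measurable_swap
    have hS1meas : Measurable S1 := by
      refine Measurable.lintegral_prod_right (f := fun u s =>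
        ENNReal.ofReal (s ^ (ν/p - 1)) * Ym1 g u s ^ (ν/p)) ?_
      exact ((measurable_snd.pow_const _).ennreal_ofReal).mul
        ((hm1.comp (measurable_fst.prodMk measurable_snd)).pow measurable_const)
    -- pointwise comparison
    have hstep : ∀ l ∈ Ioi (0:ℝ),
        W l * (∫⁻ s in Ioi (0:ℝ), Ym0 g l s) ^ (ν/p) ≤ C₂ * (W l * S1 (l/2)) := by
      intro l hl
      have hl0 : (0:ℝ) < l := hl
      have hanti : Antitone (fun s => Ym0 g l s) := fun s s' hss' =>
        measure_mono fun y hy => lt_of_le_of_lt (ENNReal.ofReal_le_ofReal hss') hy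
      have h1 := YH2 hr hr1 hanti
      have h2 : (∫⁻ s in Ioi (0:ℝ), ENNReal.ofReal (s ^ (ν/p - 1)) * Ym0 g l s ^ (ν/p))
          ≤ S1 (l/2) := by
        refine lintegral_mono fun s => mul_le_mul_right (ENNReal.rpow_le_rpow ?_ hr.le) _
        refine measure_mono fun y hy => ?_
        have h3 : ENNReal.ofReal l ≤ rearr1 g s y := Ylt_rearr _ _ hy
        exact lt_of_lt_of_le ((ENNReal.ofReal_lt_ofReal_iff hl0).2 (by linarith)) h3
      calc W l * (∫⁻ s in Ioi (0:ℝ), Ym0 g l s) ^ (ν/p)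
          ≤ W l * (C₂ * (∫⁻ s in Ioi (0:ℝ), ENNReal.ofReal (s ^ (ν/p - 1)) * Ym0 g l s ^ (ν/p))) :=
            mul_le_mul_right h1 _
        _ ≤ W l * (C₂ * S1 (l/2)) := mul_le_mul_right (mul_le_mul_right h2 _) _
        _ = C₂ * (W l * S1 (l/2)) := by ring
    -- scaling
    have hfmeas : Measurable fun u : ℝ => W (2*u) * S1 u := by
      refine Measurable.mul ?_ hS1meas
      exact (measurable_const.mul ((measurable_const_mul 2).pow_const _)).ennreal_ofReal
    have hscale : ∫⁻ l in Ioi (0:ℝ), W l * S1 (l/2)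
        = 2 * ∫⁻ u in Ioi (0:ℝ), W (2*u) * S1 u := by
      rw [← Yscale hfmeas]
      exact lintegral_congr fun l => by rw [show (2:ℝ)*(l/2) = l from by ring]
    have hW2 : ∀ u ∈ Ioi (0:ℝ), W (2*u) * S1 u
        = ENNReal.ofReal ((2:ℝ) ^ (ν-1)) * (W u * S1 u) := by
      intro u hu
      have hu0 : (0:ℝ) < u := hu
      have : ν * (2*u) ^ (ν-1) = 2 ^ (ν-1) * (ν * u ^ (ν-1)) := by
        rw [Real.mul_rpow (by norm_num) hu0.le]; ring
      rw [hW]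
      simp only []
      rw [this, ENNReal.ofReal_mul (Real.rpow_nonneg (by norm_num) _), mul_assoc]
    have hchain : ∫⁻ l in Ioi (0:ℝ), W l * (∫⁻ s in Ioi (0:ℝ), Ym0 g l s) ^ (ν/p)
        ≤ ENNReal.ofReal c₀ * ∫⁻ l in Ioi (0:ℝ), W l * S1 l := by
      calc ∫⁻ l in Ioi (0:ℝ), W l * (∫⁻ s in Ioi (0:ℝ), Ym0 g l s) ^ (ν/p)
          ≤ ∫⁻ l in Ioi (0:ℝ), C₂ * (W l * S1 (l/2)) :=
            setLIntegral_mono' measurableSet_Ioi hstep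
        _ = C₂ * ∫⁻ l in Ioi (0:ℝ), W l * S1 (l/2) := lintegral_const_mul' _ _ hC₂ne
        _ = C₂ * (2 * ∫⁻ u in Ioi (0:ℝ), W (2*u) * S1 u) := by rw [hscale]
        _ = C₂ * (2 * ∫⁻ u in Ioi (0:ℝ),
              ENNReal.ofReal ((2:ℝ) ^ (ν-1)) * (W u * S1 u)) := by
            rw [setLIntegral_congr_fun measurableSet_Ioi hW2]
        _ = C₂ * (2 * (ENNReal.ofReal ((2:ℝ) ^ (ν-1)) * ∫⁻ u in Ioi (0:ℝ), W u * S1 u)) := by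
            rw [lintegral_const_mul' _ _ ENNReal.ofReal_ne_top]
        _ = ENNReal.ofReal c₀ * ∫⁻ l in Ioi (0:ℝ), W l * S1 l := by
            rw [hc₀, ENNReal.ofReal_mul (inv_nonneg.2 hbpos.le),
              ENNReal.ofReal_mul (by norm_num : (0:ℝ) ≤ 2),
              ENNReal.ofReal_inv_of_pos hbpos, ENNReal.ofReal_ofNat, ← hC₂]
            ring
    -- conclude
    show (∫⁻ t in Ioi (0:ℝ),
        (ENNReal.ofReal (t ^ (1/p)) * rearr volume (fun x => (‖g x‖₊ : ℝ≥0∞)) t) ^ ν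
          / ENNReal.ofReal t) ^ (1/ν)
      ≤ ENNReal.ofReal (c₀ ^ (1/ν)) * (∫⁻ s in Ioi (0:ℝ), ∫⁻ t in Ioi (0:ℝ),
          ENNReal.ofReal ((s*t) ^ (ν/p - 1)) * rearr12 g s t ^ ν) ^ (1/ν)
    rw [hL, hCa]
    have hdiv : (∫⁻ l in Ioi (0:ℝ), W l * (∫⁻ s in Ioi (0:ℝ), Ym0 g l s) ^ (ν/p))
          / ENNReal.ofReal (ν/p)
        ≤ ENNReal.ofReal c₀ * ((∫⁻ l in Ioi (0:ℝ), W l * S1 l) / ENNReal.ofReal (ν/p)) := by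
      rw [← mul_div_assoc]
      exact ENNReal.div_le_div_right hchain _
    calc ((∫⁻ l in Ioi (0:ℝ), W l * (∫⁻ s in Ioi (0:ℝ), Ym0 g l s) ^ (ν/p))
          / ENNReal.ofReal (ν/p)) ^ (1/ν)
        ≤ (ENNReal.ofReal c₀ * ((∫⁻ l in Ioi (0:ℝ), W l * S1 l) / ENNReal.ofReal (ν/p))) ^ (1/ν) :=
          ENNReal.rpow_le_rpow hdiv (by positivity)
      _ = ENNReal.ofReal (c₀ ^ (1/ν)) * (((∫⁻ l in Ioi (0:ℝ), W l * S1 l)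
            / ENNReal.ofReal (ν/p)) ^ (1/ν)) := by
          rw [ENNReal.mul_rpow_of_nonneg _ _ (by positivity : (0:ℝ) ≤ 1/ν),
            ENNReal.ofReal_rpow_of_pos hc₀pos]
  · -- direction 2 : p ≤ ν
    intro hle
    have hr1 : 1 ≤ ν/p := (one_le_div hp).2 hle
    refine ⟨1, one_pos, fun g hg _ => ?_⟩
    have hL := YlorentzPow hg hp hν
    have hCa := YcalPow hg hp hν
    have hstep : ∀ l : ℝ,
        ENNReal.ofReal (ν * l ^ (ν-1)) *
            ∫⁻ s in Ioi (0:ℝ), ENNReal.ofReal (s ^ (ν/p - 1)) * Ym1 g l s ^ (ν/p)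
          ≤ ENNReal.ofReal (ν * l ^ (ν-1)) *
            (∫⁻ s in Ioi (0:ℝ), Ym0 g l s) ^ (ν/p) := by
      intro l
      refine mul_le_mul_right ?_ _
      have hanti : Antitone (fun s => Ym1 g l s) := fun s s' hss' =>
        measure_mono fun y hy =>
          lt_of_lt_of_le hy (Yrearr_antitone (volume : Measure ℝ) _ hss')
      have h1 : ∫⁻ s in Ioi (0:ℝ), ENNReal.ofReal (s ^ (ν/p - 1)) * Ym1 g l s ^ (ν/p)
          ≤ (∫⁻ s in Ioi (0:ℝ), Ym1 g l s) ^ (ν/p) := by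
        have := YH1 hr1 hanti
        rw [show (ν/p - 1) = (ν/p) - 1 from rfl]
        exact this
      refine le_trans h1 (ENNReal.rpow_le_rpow ?_ hr.le)
      exact lintegral_mono fun s => measure_mono fun y hy => Yrearr_lt _ _ hy
    show (∫⁻ s in Ioi (0:ℝ), ∫⁻ t in Ioi (0:ℝ),
        ENNReal.ofReal ((s*t) ^ (ν/p - 1)) * rearr12 g s t ^ ν) ^ (1/ν)
      ≤ ENNReal.ofReal 1 * (∫⁻ t in Ioi (0:ℝ),
        (ENNReal.ofReal (t ^ (1/p)) * rearr volume (fun x => (‖g x‖₊ : ℝ≥0∞)) t) ^ ν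
          / ENNReal.ofReal t) ^ (1/ν)
    rw [hL, hCa, ENNReal.ofReal_one, one_mul]
    refine ENNReal.rpow_le_rpow (ENNReal.div_le_div_right ?_ _) (by positivity)
    exact lintegral_mono hstep
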